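/- Let N ≥ 1, let K ≥ 1, and let (S_1, G_1), …, (S_{N+1}, G_{N+1}) be random pairs on a probability space (Ω, 𝓕, μ), with S_i real-valued scores and G_i ∈ {1, …, K} group labels, such that the family ((S_1, G_1), …, (S_{N+1}, G_{N+1})) is exchangeable. Let α ∈ (0,1) and let g ∈ {1, …, K} satisfy μ(G_{N+1} = g) > 0. For each ω, let I(ω) = { i ∈ {1, …, N} : G_i(ω) = g }, let m(ω) = |I(ω)|, let k(ω) = ⌈(1 − α)(m(ω) + 1)⌉, and define the Mondrian coverage event E_g to consist of those ω such that either k(ω) > m(ω), or S_{N+1}(ω) is at most the k(ω)-th order statistic of the multiset { S_i(ω) : i ∈ I(ω) }. Then μ( E_g ∣ G_{N+1} = g ) ≥ 1 − α. -/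

import Mathlib

open MeasureTheory

/-- A finite family of random variables is exchangeable if its joint law is invariant
under permutations of the indices. -/
def Exchangeable {Ω E : Type*} [MeasurableSpace Ω] [MeasurableSpace E]
    (μ : Measure Ω) {M : ℕ} (Z : Fin M → Ω → E) : Prop :=
  ∀ σ : Equiv.Perm (Fin M),
    Measure.map (fun ω => fun i => Z (σ i) ω) μ = Measure.map (fun ω => fun i => Z i ω) μ

/-- The `k`-th order statistic (1-indexed, counted with multiplicity) of the multiset of
values `{s i : i ∈ I}`: the least `x` such that at least `k` of those values are `≤ x`. -/
noncomputable def orderStatOn {ι : Type*} (I : Finset ι) (s : ι → ℝ) (k : ℕ) : ℝ :=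
  sInf {x : ℝ | k ≤ (I.filter fun i => s i ≤ x).card}

open MeasureTheory Finset
open scoped ENNReal

-- order statistic lower bound lemma
lemma le_orderStatOn' {ι : Type*} (I : Finset ι) (s : ι → ℝ) (k : ℕ) (hk1 : 1 ≤ k)
    (hkm : k ≤ I.card) (t : ℝ)
    (h : (I.filter fun i => s i < t).card < k) :
    t ≤ sInf {x : ℝ | k ≤ (I.filter fun i => s i ≤ x).card} := by
  have hIne : I.Nonempty := Finset.card_pos.mp (lt_of_lt_of_le hk1 hkm)
  have hne : {x : ℝ | k ≤ (I.filter fun i => s i ≤ x).card}.Nonempty := by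
    obtain ⟨x, hx⟩ := (I.image s).exists_max_image id (hIne.image s)
    refine ⟨x, ?_⟩
    have : I.filter (fun i => s i ≤ x) = I := by
      apply Finset.filter_true_of_mem
      intro i hi
      exact hx.2 (s i) (Finset.mem_image_of_mem s hi)
    simp only [Set.mem_setOf_eq, this]
    exact hkm
  apply le_csInf hne
  intro x hx
  by_contra hlt
  push_neg at hlt
  apply absurd h
  push_neg
  calc k ≤ (I.filter fun i => s i ≤ x).card := hx
  _ ≤ (I.filter fun i => s i < t).card := by
      apply Finset.card_le_card
      intro i hi
      rw [Finset.mem_filter] at hi ⊢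
      exact ⟨hi.1, lt_of_le_of_lt hi.2 hlt⟩

-- counting lemma: at most n - k indices have at least k others strictly below
lemma count_rank_le {ι : Type*} [LinearOrder ι] (J : Finset ι) (s : ι → ℝ) (k : ℕ) :
    (J.filter fun j => k ≤ (J.filter fun i => s i < s j).card).card ≤ J.card - k := by
  classical
  set key : ι → Lex (ℝ × ι) := fun i => toLex (s i, i) with hkey
  set r : ι → ℕ := fun j => (J.filter fun i => key i < key j).card with hr
  have hcr : ∀ j, (J.filter fun i => s i < s j).card ≤ r j := by
    intro j
    apply Finset.card_le_card
    intro i hi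
    rw [Finset.mem_filter] at hi ⊢
    refine ⟨hi.1, ?_⟩
    exact Prod.Lex.left _ _ hi.2
  have hrlt : ∀ j ∈ J, r j < J.card := by
    intro j hj
    have : J.filter (fun i => key i < key j) ⊆ J.erase j := by
      intro i hi
      rw [Finset.mem_filter] at hi
      rw [Finset.mem_erase]
      refine ⟨?_, hi.1⟩
      rintro rfl; exact lt_irrefl _ hi.2
    calc r j ≤ (J.erase j).card := Finset.card_le_card this
    _ < J.card := by
        rw [Finset.card_erase_of_mem hj]
        exact Nat.sub_lt (Finset.card_pos.mpr ⟨j, hj⟩) one_pos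
  have hinj : ∀ a ∈ J, ∀ b ∈ J, r a = r b → a = b := by
    have hmono : ∀ a ∈ J, ∀ b ∈ J, key a < key b → r a < r b := by
      intro a ha b hb hab
      apply Finset.card_lt_card
      constructor
      · intro i hi
        rw [Finset.mem_filter] at hi ⊢
        exact ⟨hi.1, lt_trans hi.2 hab⟩
      · intro hsub
        have : a ∈ J.filter fun i => key i < key b := by
          rw [Finset.mem_filter]; exact ⟨ha, hab⟩
        have := hsub this
        rw [Finset.mem_filter] at this
        exact lt_irrefl _ this.2
    intro a ha b hb hab
    rcases lt_trichotomy (key a) (key b) with h | h | h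
    · exact absurd hab (Nat.ne_of_lt (hmono a ha b hb h))
    · exact congrArg Prod.snd (EmbeddingLike.injective toLex h)
    · exact absurd hab.symm (Nat.ne_of_lt (hmono b hb a ha h))
  calc (J.filter fun j => k ≤ (J.filter fun i => s i < s j).card).card
      ≤ (J.filter fun j => k ≤ r j).card := by
        apply Finset.card_le_card
        intro j hj
        rw [Finset.mem_filter] at hj ⊢
        exact ⟨hj.1, le_trans hj.2 (hcr j)⟩
    _ ≤ (Finset.Ico k J.card).card := by
        apply Finset.card_le_card_of_injOn r
        · intro j hj
          rw [Finset.mem_coe, Finset.mem_filter] at hj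
          rw [Finset.mem_coe, Finset.mem_Ico]
          exact ⟨hj.2, hrlt j hj.1⟩
        · intro a ha b hb
          rw [Finset.coe_filter, Set.mem_setOf_eq] at ha hb
          exact hinj a ha.1 b hb.1
    _ = J.card - k := Nat.card_Ico k J.card

-- measurability of filter cards
lemma measurable_card_filter' {δ : Type*} [MeasurableSpace δ] {ι : Type*} (t : Finset ι)
    (p : ι → δ → Prop) [∀ i z, Decidable (p i z)] (hp : ∀ i, MeasurableSet {z | p i z}) :
    Measurable fun z => (t.filter fun i => p i z).card := by
  have : (fun z => (t.filter fun i => p i z).card)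
      = fun z => ∑ i ∈ t, if p i z then 1 else 0 := by
    funext z; exact Finset.card_filter _ _
  rw [this]
  exact Finset.measurable_sum _ fun i _ => Measurable.ite (hp i) measurable_const measurable_const
open Finset

lemma card_filter_comp_swap (N : ℕ) (j : Fin (N+1)) (Q : Fin (N+1) → Prop) [DecidablePred Q] :
    (univ.filter fun i : Fin N => Q (Equiv.swap j (Fin.last N) i.castSucc)).card
      = ((univ.filter Q).erase j).card := by
  apply Finset.card_bij (fun i _ => Equiv.swap j (Fin.last N) i.castSucc)
  · intro a ha
    rw [Finset.mem_filter] at ha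
    rw [Finset.mem_erase, Finset.mem_filter]
    refine ⟨?_, Finset.mem_univ _, ha.2⟩
    intro hc
    have : Equiv.swap j (Fin.last N) a.castSucc = Equiv.swap j (Fin.last N) (Fin.last N) := by
      rw [hc, Equiv.swap_apply_right]
    have := (Equiv.swap j (Fin.last N)).injective this
    exact (Fin.castSucc_lt_last a).ne this
  · intro a _ b _ hab
    have := (Equiv.swap j (Fin.last N)).injective hab
    exact Fin.castSucc_injective N this
  · intro x hx
    rw [Finset.mem_erase, Finset.mem_filter] at hx
    set y := Equiv.swap j (Fin.last N) x with hy
    have hyne : y ≠ Fin.last N := by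
      intro hc
      apply hx.1
      have : Equiv.swap j (Fin.last N) y = Equiv.swap j (Fin.last N) (Fin.last N) := by rw [hc]
      rw [Equiv.swap_apply_self, Equiv.swap_apply_right] at this
      exact this
    have hylt : y < Fin.last N := lt_of_le_of_ne (Fin.le_last y) hyne
    refine ⟨y.castPred hyne, ?_, ?_⟩
    · rw [Finset.mem_filter]
      refine ⟨Finset.mem_univ _, ?_⟩
      rw [Fin.castSucc_castPred, hy, Equiv.swap_apply_self]
      exact hx.2.2
    · rw [Fin.castSucc_castPred, hy, Equiv.swap_apply_self]


/-- General Mondrian conformal coverage guarantee (Theorem B.1): Mondrian conformal sets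
built from group-specific quantiles achieve coverage with probability at least `1 - α`
conditionally on each group `g` (among `K` groups) of positive probability. -/
theorem mondrian_general_coverage
    {Ω : Type*} [MeasurableSpace Ω] (μ : Measure Ω) [IsProbabilityMeasure μ]
    (N : ℕ) (hN : 1 ≤ N) (K : ℕ) (hK : 1 ≤ K)
    (S : Fin (N + 1) → Ω → ℝ) (G : Fin (N + 1) → Ω → Fin K)
    (hSmeas : ∀ i, Measurable (S i)) (hGmeas : ∀ i, Measurable (G i))
    (hexch : Exchangeable μ (fun i ω => (S i ω, G i ω)))
    (α : ℝ) (hα0 : 0 < α) (hα1 : α < 1)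
    (g : Fin K) (hg : 0 < μ {ω | G (Fin.last N) ω = g}) :
    ENNReal.ofReal (1 - α) ≤
      μ ({ω |
            (Finset.univ.filter fun i : Fin N => G i.castSucc ω = g).card <
              ⌈(1 - α) *
                (((Finset.univ.filter fun i : Fin N => G i.castSucc ω = g).card : ℝ) + 1)⌉₊ ∨
            S (Fin.last N) ω ≤
              orderStatOn (Finset.univ.filter fun i : Fin N => G i.castSucc ω = g)
                (fun i => S i.castSucc ω)
                ⌈(1 - α) *
                  (((Finset.univ.filter fun i : Fin N => G i.castSucc ω = g).card : ℝ) + 1)⌉₊}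
          ∩ {ω | G (Fin.last N) ω = g}) /
        μ {ω | G (Fin.last N) ω = g} := by
  have hα0' : (0:ℝ) ≤ α := le_of_lt hα0
  have h1α : (0:ℝ) < 1 - α := by linarith
  set F : Set Ω := {ω | G (Fin.last N) ω = g} with hFdef
  -- the bad set in the vector space
  have hVid : Measurable fun ω => fun i : Fin (N+1) => (S i ω, G i ω) :=
    measurable_pi_lambda _ fun i => (hSmeas i).prodMk (hGmeas i)
  set badSet : Set (Fin (N+1) → ℝ × Fin K) :=
    {z | (z (Fin.last N)).2 = g ∧
      ⌈(1-α) * (((Finset.univ.filter fun i : Fin N => (z i.castSucc).2 = g).card : ℝ) + 1)⌉₊ ≤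
        (Finset.univ.filter fun i : Fin N =>
          (z i.castSucc).2 = g ∧ (z i.castSucc).1 < (z (Fin.last N)).1).card} with hbaddef
  -- measurability of badSet
  have hm1 : Measurable fun z : Fin (N+1) → ℝ × Fin K =>
      (Finset.univ.filter fun i : Fin N => (z i.castSucc).2 = g).card := by
    apply measurable_card_filter'
    intro i
    exact ((measurable_pi_apply i.castSucc).snd) (MeasurableSet.singleton g)
  have hm2 : Measurable fun z : Fin (N+1) → ℝ × Fin K =>
      (Finset.univ.filter fun i : Fin N =>
        (z i.castSucc).2 = g ∧ (z i.castSucc).1 < (z (Fin.last N)).1).card := by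
    apply measurable_card_filter'
    intro i
    have ha : Measurable fun z : Fin (N+1) → ℝ × Fin K => (z i.castSucc).1 :=
      (measurable_pi_apply i.castSucc).fst
    have hb : Measurable fun z : Fin (N+1) → ℝ × Fin K => (z (Fin.last N)).1 :=
      (measurable_pi_apply (Fin.last N)).fst
    have hc : Measurable fun z : Fin (N+1) → ℝ × Fin K => (z i.castSucc).2 :=
      (measurable_pi_apply i.castSucc).snd
    exact (hc (MeasurableSet.singleton g)).inter (measurableSet_lt ha hb)
  have hbadMeas : MeasurableSet badSet := by
    rw [hbaddef]
    apply MeasurableSet.inter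
    · exact ((measurable_pi_apply (Fin.last N)).snd) (MeasurableSet.singleton g)
    · have hpm : Measurable fun z : Fin (N+1) → ℝ × Fin K =>
          ((⌈(1-α) * (((Finset.univ.filter fun i : Fin N => (z i.castSucc).2 = g).card : ℝ) + 1)⌉₊ : ℕ),
           (Finset.univ.filter fun i : Fin N =>
              (z i.castSucc).2 = g ∧ (z i.castSucc).1 < (z (Fin.last N)).1).card) :=
        Measurable.prodMk
          ((measurable_from_top (f := fun n : ℕ => ⌈(1-α) * ((n:ℝ)+1)⌉₊)).comp hm1) hm2
      exact hpm ((Set.to_countable {p : ℕ × ℕ | p.1 ≤ p.2}).measurableSet)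
  -- the swapped events
  set B : Fin (N+1) → Set Ω := fun j =>
    (fun ω => fun i => (S (Equiv.swap j (Fin.last N) i) ω, G (Equiv.swap j (Fin.last N) i) ω))
      ⁻¹' badSet with hBdef
  have hVmeas : ∀ σ : Equiv.Perm (Fin (N+1)),
      Measurable fun ω => fun i => (S (σ i) ω, G (σ i) ω) :=
    fun σ => measurable_pi_lambda _ fun i => ((hSmeas (σ i)).prodMk (hGmeas (σ i)))
  set failC : Set Ω := (fun ω => fun i => (S i ω, G i ω)) ⁻¹' badSet with hfailCdef
  have hfailCMeas : MeasurableSet failC := hVid hbadMeas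
  have hBMeas : ∀ j, MeasurableSet (B j) := fun j => (hVmeas _) hbadMeas
  -- all B j have the same measure as failC
  have hBeq : ∀ j, μ (B j) = μ failC := by
    intro j
    have h1 : Measure.map
        (fun ω => fun i => (S (Equiv.swap j (Fin.last N) i) ω, G (Equiv.swap j (Fin.last N) i) ω))
        μ = Measure.map (fun ω => fun i => (S i ω, G i ω)) μ :=
      hexch (Equiv.swap j (Fin.last N))
    have e1 : μ (B j) = Measure.map
        (fun ω => fun i => (S (Equiv.swap j (Fin.last N) i) ω, G (Equiv.swap j (Fin.last N) i) ω))
        μ badSet := (Measure.map_apply (hVmeas _) hbadMeas).symm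
    have e2 : Measure.map (fun ω => fun i => (S i ω, G i ω)) μ badSet = μ failC :=
      Measure.map_apply hVid hbadMeas
    rw [e1, h1, e2]
  -- all group events have the same measure as F
  have hGeq : ∀ j, μ {ω | G j ω = g} = μ F := by
    intro j
    have h1 : Measure.map
        (fun ω => fun i => (S (Equiv.swap j (Fin.last N) i) ω, G (Equiv.swap j (Fin.last N) i) ω))
        μ = Measure.map (fun ω => fun i => (S i ω, G i ω)) μ :=
      hexch (Equiv.swap j (Fin.last N))
    have hgm : MeasurableSet {z : Fin (N+1) → ℝ × Fin K | (z (Fin.last N)).2 = g} :=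
      (measurable_snd.comp (measurable_pi_apply (Fin.last N))) (MeasurableSet.singleton g)
    have e1 : (fun ω => fun i => (S (Equiv.swap j (Fin.last N) i) ω, G (Equiv.swap j (Fin.last N) i) ω))
        ⁻¹' {z : Fin (N+1) → ℝ × Fin K | (z (Fin.last N)).2 = g} = {ω | G j ω = g} := by
      ext ω
      simp only [Set.mem_preimage, Set.mem_setOf_eq, Equiv.swap_apply_right]
    have e2 : (fun ω => fun i => (S i ω, G i ω))
        ⁻¹' {z : Fin (N+1) → ℝ × Fin K | (z (Fin.last N)).2 = g} = F := rfl
    have s1 : Measure.map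
        (fun ω => fun i => (S (Equiv.swap j (Fin.last N) i) ω, G (Equiv.swap j (Fin.last N) i) ω))
        μ {z : Fin (N+1) → ℝ × Fin K | (z (Fin.last N)).2 = g} = μ {ω | G j ω = g} := by
      rw [Measure.map_apply (hVmeas _) hgm, e1]
    have s2 : Measure.map (fun ω => fun i => (S i ω, G i ω)) μ
        {z : Fin (N+1) → ℝ × Fin K | (z (Fin.last N)).2 = g} = μ F := by
      rw [Measure.map_apply hVid hgm, e2]
    rw [← s1, h1, s2]
  -- pointwise counting bound
  have hpoint : ∀ ω, (∑ j : Fin (N+1), (B j).indicator (1 : Ω → ℝ≥0∞) ω)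
      ≤ ENNReal.ofReal α * ∑ j : Fin (N+1), ({ω | G j ω = g} : Set Ω).indicator 1 ω := by
    intro ω
    classical
    set J : Finset (Fin (N+1)) := Finset.univ.filter (fun j => G j ω = g) with hJdef
    set n : ℕ := J.card with hndef
    set k : ℕ := ⌈(1-α) * (n:ℝ)⌉₊ with hkdef
    have hsum1 : (∑ j : Fin (N+1), (B j).indicator (1 : Ω → ℝ≥0∞) ω)
        = ((Finset.univ.filter fun j => ω ∈ B j).card : ℝ≥0∞) := by
      simp only [Set.indicator_apply, Pi.one_apply]
      rw [Finset.sum_boole]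
    have hsum2 : (∑ j : Fin (N+1), ({ω | G j ω = g} : Set Ω).indicator (1 : Ω → ℝ≥0∞) ω)
        = (n : ℝ≥0∞) := by
      simp only [Set.indicator_apply, Pi.one_apply, Set.mem_setOf_eq]
      rw [Finset.sum_boole]
    rw [hsum1, hsum2]
    -- identify membership in B j for j in the group
    have hmem : ∀ j, ω ∈ B j → j ∈ J ∧ k ≤ (J.filter fun i => S i ω < S j ω).card := by
      intro j hj
      rw [hBdef, Set.mem_preimage, hbaddef, Set.mem_setOf_eq] at hj
      simp only [Equiv.swap_apply_right] at hj
      obtain ⟨hjg, hjc⟩ := hj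
      have hjJ : j ∈ J := by rw [hJdef, Finset.mem_filter]; exact ⟨Finset.mem_univ _, hjg⟩
      refine ⟨hjJ, ?_⟩
      have hm : (Finset.univ.filter fun i : Fin N =>
          G (Equiv.swap j (Fin.last N) i.castSucc) ω = g).card = (J.erase j).card :=
        card_filter_comp_swap N j (fun x => G x ω = g)
      have hc : (Finset.univ.filter fun i : Fin N =>
          G (Equiv.swap j (Fin.last N) i.castSucc) ω = g ∧
            S (Equiv.swap j (Fin.last N) i.castSucc) ω < S j ω).card
          = ((Finset.univ.filter fun x => G x ω = g ∧ S x ω < S j ω).erase j).card :=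
        card_filter_comp_swap N j (fun x => G x ω = g ∧ S x ω < S j ω)
      have hjn1 : 1 ≤ n := Finset.card_pos.mpr ⟨j, hjJ⟩
      have hmn : (J.erase j).card = n - 1 := by rw [Finset.card_erase_of_mem hjJ]
      have hcast : (((J.erase j).card : ℝ) + 1) = (n : ℝ) := by
        rw [hmn]
        have : (n - 1) + 1 = n := Nat.succ_pred_eq_of_pos hjn1
        exact_mod_cast congrArg (Nat.cast (R := ℝ)) this
      rw [hm, hcast] at hjc
      have hErase : (Finset.univ.filter fun x => G x ω = g ∧ S x ω < S j ω).erase j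
          = J.filter fun i => S i ω < S j ω := by
        rw [Finset.erase_eq_of_notMem, hJdef, Finset.filter_filter]
        simp only [Finset.mem_filter]
        rintro ⟨-, -, hlt⟩
        exact lt_irrefl _ hlt
      rw [hc, hErase] at hjc
      exact hjc
    have hsubset : (Finset.univ.filter fun j => ω ∈ B j)
        ⊆ J.filter fun j => k ≤ (J.filter fun i => S i ω < S j ω).card := by
      intro j hj
      rw [Finset.mem_filter] at hj
      obtain ⟨h1, h2⟩ := hmem j hj.2
      rw [Finset.mem_filter]
      exact ⟨h1, h2⟩
    have hcardle : (Finset.univ.filter fun j => ω ∈ B j).card ≤ n - k := by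
      calc (Finset.univ.filter fun j => ω ∈ B j).card
          ≤ (J.filter fun j => k ≤ (J.filter fun i => S i ω < S j ω).card).card :=
            Finset.card_le_card hsubset
        _ ≤ n - k := count_rank_le J (fun i => S i ω) k
    -- real arithmetic
    have hreal : (((n - k : ℕ) : ℝ)) ≤ α * n := by
      rcases le_or_gt k n with h | h
      · rw [Nat.cast_sub h]
        have : (1-α) * (n:ℝ) ≤ k := Nat.le_ceil _
        nlinarith [Nat.cast_nonneg (α := ℝ) n]
      · rw [Nat.sub_eq_zero_of_le (le_of_lt h), Nat.cast_zero]
        positivity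
    calc ((Finset.univ.filter fun j => ω ∈ B j).card : ℝ≥0∞)
        ≤ ((n - k : ℕ) : ℝ≥0∞) := by exact_mod_cast hcardle
      _ ≤ ENNReal.ofReal (α * n) := by
          rw [← ENNReal.ofReal_natCast]
          exact ENNReal.ofReal_le_ofReal hreal
      _ = ENNReal.ofReal α * (n : ℝ≥0∞) := by
          rw [ENNReal.ofReal_mul hα0', ENNReal.ofReal_natCast]
  -- integrate the pointwise bound
  have hsums : ((N:ℝ≥0∞) + 1) * μ failC ≤ ENNReal.ofReal α * (((N:ℝ≥0∞) + 1) * μ F) := by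
    have lhs : ((N:ℝ≥0∞) + 1) * μ failC = ∑ j : Fin (N+1), μ (B j) := by
      rw [Finset.sum_congr rfl fun j _ => hBeq j, Finset.sum_const, Finset.card_univ,
        Fintype.card_fin, nsmul_eq_mul]
      push_cast
      ring
    have rhs : ((N:ℝ≥0∞) + 1) * μ F = ∑ j : Fin (N+1), μ {ω | G j ω = g} := by
      rw [Finset.sum_congr rfl fun j _ => hGeq j, Finset.sum_const, Finset.card_univ,
        Fintype.card_fin, nsmul_eq_mul]
      push_cast
      ring
    rw [lhs, rhs]
    have hGjMeas : ∀ j : Fin (N+1), MeasurableSet {ω | G j ω = g} :=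
      fun j => (hGmeas j) (MeasurableSet.singleton g)
    calc ∑ j : Fin (N+1), μ (B j)
        = ∑ j : Fin (N+1), ∫⁻ ω, (B j).indicator 1 ω ∂μ := by
          exact Finset.sum_congr rfl fun j _ => (lintegral_indicator_one (hBMeas j)).symm
      _ = ∫⁻ ω, ∑ j : Fin (N+1), (B j).indicator 1 ω ∂μ :=
          (lintegral_finset_sum _ fun j _ => measurable_one.indicator (hBMeas j)).symm
      _ ≤ ∫⁻ ω, ENNReal.ofReal α * ∑ j : Fin (N+1), ({ω | G j ω = g} : Set Ω).indicator 1 ω ∂μ :=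
          lintegral_mono hpoint
      _ = ENNReal.ofReal α * ∫⁻ ω, ∑ j : Fin (N+1), ({ω | G j ω = g} : Set Ω).indicator 1 ω ∂μ :=
          lintegral_const_mul' _ _ ENNReal.ofReal_ne_top
      _ = ENNReal.ofReal α * ∑ j : Fin (N+1), μ {ω | G j ω = g} := by
          rw [lintegral_finset_sum _ fun j _ => measurable_one.indicator (hGjMeas j)]
          congr 1
          exact Finset.sum_congr rfl fun j _ => lintegral_indicator_one (hGjMeas j)
  have hfail : μ failC ≤ ENNReal.ofReal α * μ F := by
    have hne : ((N:ℝ≥0∞) + 1) ≠ 0 := by simp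
    have hnt : ((N:ℝ≥0∞) + 1) ≠ ⊤ := by
      simp [ENNReal.add_ne_top]
    rw [show ENNReal.ofReal α * (((N:ℝ≥0∞) + 1) * μ F)
        = ((N:ℝ≥0∞) + 1) * (ENNReal.ofReal α * μ F) by ring] at hsums
    exact (ENNReal.mul_le_mul_iff_right hne hnt).mp hsums
  -- the good event contains F \ failC
  set Egood : Set Ω := {ω |
      (Finset.univ.filter fun i : Fin N => G i.castSucc ω = g).card <
        ⌈(1 - α) *
          (((Finset.univ.filter fun i : Fin N => G i.castSucc ω = g).card : ℝ) + 1)⌉₊ ∨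
      S (Fin.last N) ω ≤
        orderStatOn (Finset.univ.filter fun i : Fin N => G i.castSucc ω = g)
          (fun i => S i.castSucc ω)
          ⌈(1 - α) *
            (((Finset.univ.filter fun i : Fin N => G i.castSucc ω = g).card : ℝ) + 1)⌉₊} with hEdef
  have hsubE : F \ failC ⊆ Egood ∩ F := by
    rintro ω ⟨hωF, hωnot⟩
    refine ⟨?_, hωF⟩
    rw [hfailCdef, Set.mem_preimage, hbaddef, Set.mem_setOf_eq] at hωnot
    push_neg at hωnot
    have hcnt := hωnot hωF
    set I : Finset (Fin N) := Finset.univ.filter fun i : Fin N => G i.castSucc ω = g with hIdef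
    set m : ℕ := I.card with hmdef
    set k : ℕ := ⌈(1 - α) * ((m:ℝ) + 1)⌉₊ with hkdef
    rw [hEdef, Set.mem_setOf_eq]
    rcases lt_or_ge m k with h | h
    · exact Or.inl h
    · right
      have hk1 : 1 ≤ k := by
        rw [hkdef, Nat.one_le_ceil_iff]
        positivity
      apply le_orderStatOn' I (fun i => S i.castSucc ω) k hk1 h
      calc (I.filter fun i => S i.castSucc ω < S (Fin.last N) ω).card
          = (Finset.univ.filter fun i : Fin N =>
              G i.castSucc ω = g ∧ S i.castSucc ω < S (Fin.last N) ω).card := by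
            rw [hIdef, Finset.filter_filter]
        _ < k := hcnt
  -- put it together
  have hFne : μ F ≠ ⊤ := measure_ne_top μ F
  have key : ENNReal.ofReal (1 - α) * μ F ≤ μ (Egood ∩ F) := by
    calc ENNReal.ofReal (1 - α) * μ F
        = (1 - ENNReal.ofReal α) * μ F := by
          rw [← ENNReal.ofReal_one, ← ENNReal.ofReal_sub _ hα0']
      _ = 1 * μ F - ENNReal.ofReal α * μ F := ENNReal.sub_mul (fun _ _ => hFne)
      _ = μ F - ENNReal.ofReal α * μ F := by rw [one_mul]
      _ ≤ μ F - μ failC := tsub_le_tsub_left hfail _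
      _ ≤ μ (F \ failC) := le_measure_diff
      _ ≤ μ (Egood ∩ F) := measure_mono hsubE
  rw [ENNReal.le_div_iff_mul_le (Or.inl (ne_of_gt hg)) (Or.inl hFne)]
  exact key
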